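/- Specializing the |a₂| bound to λ=1, μ=1, δ=0: if a₂, c₂, d₂ ∈ ℂ with |c₂| ≤ 1, |d₂| ≤ 1, t ∈ (1/2,1), and [6 − 2(4t²−1)·4/(4t²)]a₂² = 2t(c₂+d₂), then |a₂| ≤ t√(2t)/√(1−t²). -/

import Mathlib

theorem stmt_13 (t : ℝ) (ht : 1 / 2 < t ∧ t < 1)
    (a2 c2 d2 : ℂ) (hc2 : ‖c2‖ ≤ 1) (hd2 : ‖d2‖ ≤ 1)
    (heq : ((6 - 2 * (4 * t ^ 2 - 1) * 4 / (4 * t ^ 2) : ℝ) : ℂ) * a2 ^ 2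
        = ((2 * t : ℝ) : ℂ) * (c2 + d2)) :
    ‖a2‖ ≤ t * Real.sqrt (2 * t) / Real.sqrt (1 - t ^ 2) := by
  obtain ⟨ht1, ht2⟩ := ht
  have htpos : 0 < t := lt_trans (by norm_num) ht1
  have h1t : 0 < 1 - t ^ 2 := by nlinarith
  have hcoef : (6 - 2 * (4 * t ^ 2 - 1) * 4 / (4 * t ^ 2)) = 2 * (1 - t ^ 2) / t ^ 2 := by
    field_simp; ring
  have hcoefpos : 0 < 2 * (1 - t ^ 2) / t ^ 2 := by positivity
  -- take absolute values
  have habs := congrArg (‖·‖) heq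
  rw [norm_mul, norm_mul, norm_pow, Complex.norm_real, Complex.norm_real, Real.norm_eq_abs, Real.norm_eq_abs, hcoef] at habs
  have hrhs : ‖c2 + d2‖ ≤ 2 := by
    calc ‖c2 + d2‖ ≤ ‖c2‖ + ‖d2‖ := norm_add_le _ _
    _ ≤ 2 := by linarith
  have hsq : ‖a2‖ ^ 2 ≤ 2 * t ^ 3 / (1 - t ^ 2) := by
    have h2 : 2 * (1 - t ^ 2) / t ^ 2 * ‖a2‖ ^ 2 ≤ 2 * t * 2 := by
      rw [abs_of_pos hcoefpos, abs_of_pos (by linarith : (0:ℝ) < 2 * t)] at habs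
      calc 2 * (1 - t ^ 2) / t ^ 2 * ‖a2‖ ^ 2 = 2 * t * ‖c2 + d2‖ := habs
      _ ≤ 2 * t * 2 := by nlinarith [norm_nonneg (c2 + d2)]
    rw [div_mul_eq_mul_div, div_le_iff₀ (by positivity : (0:ℝ) < t ^ 2)] at h2
    rw [le_div_iff₀ h1t]
    nlinarith
  have htarget : 0 ≤ t * Real.sqrt (2 * t) / Real.sqrt (1 - t ^ 2) := by positivity
  have htsq : (t * Real.sqrt (2 * t) / Real.sqrt (1 - t ^ 2)) ^ 2 = 2 * t ^ 3 / (1 - t ^ 2) := by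
    rw [div_pow, mul_pow, Real.sq_sqrt (by linarith : (0:ℝ) ≤ 2 * t),
      Real.sq_sqrt h1t.le]
    ring
  calc ‖a2‖ = Real.sqrt (‖a2‖ ^ 2) :=
        (Real.sqrt_sq (norm_nonneg a2)).symm
  _ ≤ Real.sqrt (2 * t ^ 3 / (1 - t ^ 2)) := Real.sqrt_le_sqrt hsq
  _ = t * Real.sqrt (2 * t) / Real.sqrt (1 - t ^ 2) := by
      rw [← htsq, Real.sqrt_sq htarget]
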